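/- Let A : ℝ → Matrix (Fin n) (Fin n) ℝ be a continuous family of real n × n matrices, and let λ : ℝ → ℂ be continuous on [0, 1] such that for every t ∈ [0, 1], λ(t) is a simple eigenvalue of A(t) (a root of multiplicity one of the characteristic polynomial of A(t) over ℂ). If λ(0) is real, then λ(t) is real for every t ∈ [0, 1]; in particular λ(1) is real. -/

import Mathlib

open Polynomial

namespace SimpleEigAux

open Matrix

variable {n : ℕ}

/-- The matrix `z • 1 - B` over `ℂ`, written entrywise. -/
def zmat (B : Matrix (Fin n) (Fin n) ℝ) (z : ℂ) : Matrix (Fin n) (Fin n) ℂ :=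
  Matrix.of fun i k => (if i = k then z else 0) - (B i k : ℂ)

lemma eval_charpoly (B : Matrix (Fin n) (Fin n) ℝ) (z : ℂ) :
    ((B.map Complex.ofReal).charpoly).eval z = (zmat B z).det := by
  rw [Matrix.charpoly, Polynomial.eval, ← Polynomial.coe_eval₂RingHom, RingHom.map_det]
  congr 1
  ext i k
  simp [Matrix.charmatrix_apply, Matrix.diagonal, zmat, Matrix.map_apply, apply_ite]

lemma det_zmat_conj (B : Matrix (Fin n) (Fin n) ℝ) (z : ℂ) :
    (zmat B ((starRingEnd ℂ) z)).det = (starRingEnd ℂ) ((zmat B z).det) := by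
  rw [RingHom.map_det]
  congr 1
  ext i k
  simp [zmat, Matrix.map_apply, apply_ite, Complex.conj_ofReal]

/-- Intermediate matrices for the column-telescoping. -/
def gmat (B : Matrix (Fin n) (Fin n) ℝ) (z w : ℂ) (j : ℕ) : Matrix (Fin n) (Fin n) ℂ :=
  Matrix.of fun i k => if (k : ℕ) < j then zmat B z i k else zmat B w i k

/-- The "divided difference" of `z ↦ det (z • 1 - B)`. -/
noncomputable def gsum (B : Matrix (Fin n) (Fin n) ℝ) (z w : ℂ) : ℂ :=
  ∑ j : Fin n, ((gmat B z w j).updateCol j (Pi.single j 1)).det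

lemma gmat_zero (B : Matrix (Fin n) (Fin n) ℝ) (z w : ℂ) : gmat B z w 0 = zmat B w := by
  ext i k; simp [gmat]

lemma gmat_last (B : Matrix (Fin n) (Fin n) ℝ) (z w : ℂ) : gmat B z w n = zmat B z := by
  ext i k; simp [gmat, k.isLt]

lemma gmat_succ (B : Matrix (Fin n) (Fin n) ℝ) (z w : ℂ) (j : Fin n) :
    gmat B z w ((j : ℕ) + 1) =
      (gmat B z w j).updateCol j
        (fun i => zmat B w i j + ((z - w) • (Pi.single (j : Fin n) (1 : ℂ) : Fin n → ℂ)) i) := by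
  ext i k
  rw [Matrix.updateCol_apply]
  by_cases hk : k = j
  · subst hk
    simp only [gmat, Matrix.of_apply, lt_irrefl, if_false, Nat.lt_succ_iff, le_refl, if_true]
    by_cases hij : i = k
    · subst hij
      simp [zmat, Pi.single_apply]
    · simp [zmat, Pi.single_apply, hij]
  · have : ((k : ℕ) < (j : ℕ) + 1) ↔ ((k : ℕ) < (j : ℕ)) := by
      constructor
      · intro h
        rcases Nat.lt_succ_iff_lt_or_eq.mp h with h' | h'
        · exact h'
        · exact absurd (Fin.ext h') hk
      · exact fun h => Nat.lt_succ_of_lt h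
    simp only [gmat, Matrix.of_apply, hk, if_false, this]

lemma telescope (B : Matrix (Fin n) (Fin n) ℝ) (z w : ℂ) :
    (z - w) * gsum B z w = (zmat B z).det - (zmat B w).det := by
  have key : ∀ j : Fin n,
      (gmat B z w ((j : ℕ) + 1)).det
        = (gmat B z w j).det
          + (z - w) * ((gmat B z w j).updateCol j (Pi.single j 1)).det := by
    intro j
    rw [gmat_succ]
    have hsplit : (fun i => zmat B w i j + ((z - w) • (Pi.single (j : Fin n) (1 : ℂ) : Fin n → ℂ)) i)
        = (fun i => zmat B w i j) + ((z - w) • (Pi.single (j : Fin n) (1 : ℂ) : Fin n → ℂ)) := rfl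
    rw [hsplit, Matrix.det_updateCol_add]
    congr 1
    · have : (fun i => zmat B w i j) = fun i => gmat B z w j i j := by
        funext i; simp [gmat]
      rw [this, Matrix.updateCol_eq_self]
    · rw [Matrix.det_updateCol_smul]
  have tele : ∑ j ∈ Finset.range n,
      ((gmat B z w (j + 1)).det - (gmat B z w j).det)
        = (gmat B z w n).det - (gmat B z w 0).det :=
    Finset.sum_range_sub (fun j => (gmat B z w j).det) n
  calc (z - w) * gsum B z w
      = ∑ j : Fin n, ((gmat B z w ((j : ℕ) + 1)).det - (gmat B z w (j : ℕ)).det) := by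
        rw [gsum, Finset.mul_sum]
        refine Finset.sum_congr rfl fun j _ => ?_
        rw [key j]; ring
    _ = ∑ j ∈ Finset.range n, ((gmat B z w (j + 1)).det - (gmat B z w j).det) := by
        rw [Finset.sum_range fun j => ((gmat B z w (j + 1)).det - (gmat B z w j).det)]
    _ = (zmat B z).det - (zmat B w).det := by rw [tele, gmat_zero, gmat_last]

lemma continuous_gsum (A : ℝ → Matrix (Fin n) (Fin n) ℝ)
    (hA : ∀ i j, Continuous fun t => A t i j) :
    Continuous fun p : ℝ × ℂ × ℂ => gsum (A p.1) p.2.1 p.2.2 := by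
  refine continuous_finset_sum _ fun j _ => ?_
  apply Continuous.matrix_det
  refine continuous_matrix fun i k => ?_
  simp only [Matrix.updateCol_apply, gmat, zmat, Matrix.of_apply]
  have hAik : Continuous fun p : ℝ × ℂ × ℂ => ((A p.1 i k : ℝ) : ℂ) :=
    Complex.continuous_ofReal.comp ((hA i k).comp continuous_fst)
  split_ifs <;>
    first
      | exact continuous_const
      | exact continuous_snd.fst.sub hAik
      | exact continuous_snd.snd.sub hAik
      | exact continuous_const.sub hAik

attribute [irreducible] gsum

lemma gsum_diag_aux (B : Matrix (Fin n) (Fin n) ℝ) (z : ℂ) (p : Polynomial ℂ)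
    (hf : ∀ w : ℂ, p.eval w = (zmat B w).det) :
    gsum B z z = (p.derivative).eval z := by
  have hder : HasDerivAt (fun w : ℂ => p.eval w) (p.derivative.eval z) z :=
    Polynomial.hasDerivAt p z
  have h1 : Filter.Tendsto (slope (fun w : ℂ => p.eval w) z) (nhdsWithin z {z}ᶜ)
      (nhds (p.derivative.eval z)) := hasDerivAt_iff_tendsto_slope.mp hder
  have hg : Continuous fun w : ℂ => gsum B w z := by
    have := continuous_gsum (fun _ : ℝ => B) (fun i j => continuous_const)
    exact this.comp (by fun_prop : Continuous fun w : ℂ => ((0 : ℝ), w, z))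
  have h2 : Filter.Tendsto (slope (fun w : ℂ => p.eval w) z) (nhdsWithin z {z}ᶜ)
      (nhds (gsum B z z)) := by
    have htend : Filter.Tendsto (fun w : ℂ => gsum B w z) (nhdsWithin z {z}ᶜ)
        (nhds (gsum B z z)) :=
      (hg.tendsto z).mono_left nhdsWithin_le_nhds
    refine htend.congr' ?_
    filter_upwards [self_mem_nhdsWithin] with w hw
    have hwz : w - z ≠ 0 := sub_ne_zero.mpr hw
    have := telescope B w z
    rw [slope_def_field, hf, hf, ← this]
    field_simp
  exact tendsto_nhds_unique h2 h1

lemma gsum_diag (B : Matrix (Fin n) (Fin n) ℝ) (z : ℂ) :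
    gsum B z z = (((B.map Complex.ofReal).charpoly).derivative).eval z :=
  gsum_diag_aux B z _ (eval_charpoly B)

end SimpleEigAux

open SimpleEigAux

/-- Scenario (a) of Section 3.1: along a continuous family of real matrices on `[0, 1]`,
a continuous eigenvalue branch that stays simple and starts real remains real. -/
theorem simple_eigenvalue_branch_stays_real
    (n : ℕ) (A : ℝ → Matrix (Fin n) (Fin n) ℝ)
    (hA : ∀ i j, Continuous fun t => A t i j)
    (lam : ℝ → ℂ) (hcont : ContinuousOn lam (Set.Icc 0 1))
    (hsimple : ∀ t ∈ Set.Icc (0 : ℝ) 1,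
      (((A t).map (Complex.ofReal)).charpoly).rootMultiplicity (lam t) = 1)
    (h0 : (lam 0).im = 0) :
    ∀ t ∈ Set.Icc (0 : ℝ) 1, (lam t).im = 0 := by
  classical
  set H : ℝ → ℂ := fun t => gsum (A t) (lam t) ((starRingEnd ℂ) (lam t)) with hH
  -- basic facts from simplicity
  have hp_ne : ∀ t ∈ Set.Icc (0 : ℝ) 1, ((A t).map Complex.ofReal).charpoly ≠ 0 := by
    intro t ht h
    have := hsimple t ht
    rw [h, Polynomial.rootMultiplicity_zero] at this
    exact absurd this (by norm_num)
  have hroot : ∀ t ∈ Set.Icc (0 : ℝ) 1,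
      (((A t).map Complex.ofReal).charpoly).IsRoot (lam t) := by
    intro t ht
    have h1 : 0 < (((A t).map Complex.ofReal).charpoly).rootMultiplicity (lam t) := by
      rw [hsimple t ht]; norm_num
    exact (Polynomial.rootMultiplicity_pos (hp_ne t ht)).mp h1
  -- key pointwise characterization
  have key : ∀ t ∈ Set.Icc (0 : ℝ) 1, ((lam t).im = 0 ↔ H t ≠ 0) := by
    intro t ht
    constructor
    · intro him
      have hconj : (starRingEnd ℂ) (lam t) = lam t := Complex.conj_eq_iff_im.mpr him
      have hdiag : H t = (((A t).map Complex.ofReal).charpoly).derivative.eval (lam t) := by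
        rw [hH]; simp only [hconj]; exact gsum_diag (A t) (lam t)
      rw [hdiag]
      intro hder
      have : 1 < (((A t).map Complex.ofReal).charpoly).rootMultiplicity (lam t) :=
        (Polynomial.one_lt_rootMultiplicity_iff_isRoot (hp_ne t ht)).mpr ⟨hroot t ht, hder⟩
      rw [hsimple t ht] at this
      exact absurd this (by norm_num)
    · intro hHne
      by_contra him
      have hzne : lam t - (starRingEnd ℂ) (lam t) ≠ 0 := by
        intro h
        exact him (Complex.conj_eq_iff_im.mp (sub_eq_zero.mp h).symm)
      have h1 : (zmat (A t) (lam t)).det = 0 := by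
        rw [← eval_charpoly]; exact hroot t ht
      have h2 : (zmat (A t) ((starRingEnd ℂ) (lam t))).det = 0 := by
        rw [det_zmat_conj, h1, map_zero]
      have := telescope (A t) (lam t) ((starRingEnd ℂ) (lam t))
      rw [h1, h2, sub_zero] at this
      rcases mul_eq_zero.mp this with h | h
      · exact hzne h
      · exact hHne h
  -- continuity of H on Icc
  have hHcont : ContinuousOn H (Set.Icc (0 : ℝ) 1) := by
    have houter := continuous_gsum A hA
    have hinner : ContinuousOn (fun t => (t, lam t, (starRingEnd ℂ) (lam t)))
        (Set.Icc (0 : ℝ) 1) := by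
      refine continuousOn_id.prodMk (hcont.prodMk ?_)
      exact Complex.continuous_conj.comp_continuousOn hcont
    exact houter.comp_continuousOn hinner
  -- clopen argument on the subtype
  set X := Set.Icc (0 : ℝ) 1
  haveI : PreconnectedSpace X := Subtype.preconnectedSpace isPreconnected_Icc
  set S : Set X := {x : X | (lam x).im = 0} with hS
  have hSopen : IsOpen S := by
    have : S = (X.restrict H) ⁻¹' {(0 : ℂ)}ᶜ := by
      ext x
      simp only [hS, Set.mem_setOf_eq, Set.mem_preimage, Set.mem_compl_iff,
        Set.mem_singleton_iff, Set.restrict_apply]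
      exact key x x.2
    rw [this]
    exact (hHcont.restrict.isOpen_preimage _ isOpen_compl_singleton)
  have hSclosed : IsClosed S := by
    have hc : Continuous fun x : X => (lam x).im :=
      Complex.continuous_im.comp hcont.restrict
    exact isClosed_eq hc continuous_const
  have hS0 : (⟨0, by constructor <;> norm_num⟩ : X) ∈ S := h0
  have hSuniv : S = Set.univ := by
    rcases isClopen_iff.mp ⟨hSclosed, hSopen⟩ with h | h
    · exact absurd (h ▸ hS0) (Set.notMem_empty _)
    · exact h
  intro t ht
  have : (⟨t, ht⟩ : X) ∈ S := hSuniv ▸ Set.mem_univ _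
  exact this
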